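/- Let G be a bipartite graph with parts X, Y of size n each, with minimum degree at least (3/4 + η)n for some η > 0 and n sufficiently large. In any 2-coloring of E(G), let H₁ be a largest monochromatic (say blue) component satisfying |H₁∩X|, |H₁∩Y| ≥ n/2, set X₁ = H₁∩X, Y₁ = H₁∩Y, X₂ = X∖X₁, Y₂ = Y∖Y₁. Then all edges of G between X₁ and Y₂, and between X₂ and Y₁, are red; moreover any two vertices u, u′ ∈ X₂ have a common red neighbor in Y₁, and any two vertices v, v′ ∈ Y₂ have a common red neighbor in X₁. -/
import Mathlib


open SimpleGraph Set



lemma common_nbr_aux {V : Type*} [Fintype V] (G : SimpleGraph V) (η : ℝ) (hη : 0 < η)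
    (n : ℕ) (hn : 1 ≤ n) (Ys Y₁ : Set V) (hY₁s : Y₁ ⊆ Ys) (hYs : Ys.ncard = n)
    (hy₁ : (n : ℝ) / 2 ≤ (Y₁.ncard : ℝ)) (u u' : V)
    (hu : G.neighborSet u ⊆ Ys) (hu' : G.neighborSet u' ⊆ Ys)
    (hdu : (3 / 4 + η) * n ≤ ((G.neighborSet u).ncard : ℝ))
    (hdu' : (3 / 4 + η) * n ≤ ((G.neighborSet u').ncard : ℝ)) :
    ∃ y ∈ Y₁, G.Adj u y ∧ G.Adj u' y := by
  set A : Set V := G.neighborSet u ∩ Y₁ with hA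
  set A' : Set V := G.neighborSet u' ∩ Y₁ with hA'
  have hdiff : ((Ys \ Y₁).ncard : ℝ) = (n : ℝ) - Y₁.ncard := by
    rw [Set.ncard_diff hY₁s (Set.toFinite _), hYs,
      Nat.cast_sub (by rw [← hYs]; exact Set.ncard_le_ncard hY₁s (Set.toFinite _))]
  have key : ∀ (v : V), G.neighborSet v ⊆ Ys →
      ((G.neighborSet v).ncard : ℝ) ≤ ((G.neighborSet v ∩ Y₁).ncard : ℝ) + ((n : ℝ) - Y₁.ncard) := by
    intro v hv
    rw [← hdiff]
    have hsub : G.neighborSet v ⊆ (G.neighborSet v ∩ Y₁) ∪ (Ys \ Y₁) := by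
      intro w hw
      by_cases hwY : w ∈ Y₁
      · exact Or.inl ⟨hw, hwY⟩
      · exact Or.inr ⟨hv hw, hwY⟩
    calc ((G.neighborSet v).ncard : ℝ)
        ≤ (((G.neighborSet v ∩ Y₁) ∪ (Ys \ Y₁)).ncard : ℝ) := by
          exact_mod_cast Set.ncard_le_ncard hsub (Set.toFinite _)
      _ ≤ ((G.neighborSet v ∩ Y₁).ncard : ℝ) + ((Ys \ Y₁).ncard : ℝ) := by
          exact_mod_cast Set.ncard_union_le _ _
  have hAb : (3 / 4 + η) * n - ((n : ℝ) - Y₁.ncard) ≤ (A.ncard : ℝ) := by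
    have := key u hu; linarith
  have hA'b : (3 / 4 + η) * n - ((n : ℝ) - Y₁.ncard) ≤ (A'.ncard : ℝ) := by
    have := key u' hu'; linarith
  have hne : (A ∩ A').Nonempty := by
    by_contra hcon
    rw [Set.not_nonempty_iff_eq_empty] at hcon
    have hsum : (A ∪ A').ncard + (A ∩ A').ncard = A.ncard + A'.ncard :=
      Set.ncard_union_add_ncard_inter A A' (Set.toFinite _) (Set.toFinite _)
    have hint : (A ∩ A').ncard = 0 := by rw [hcon]; simp
    have hun : (A ∪ A').ncard ≤ Y₁.ncard := by
      apply Set.ncard_le_ncard _ (Set.toFinite _)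
      rintro w (⟨_, hw⟩ | ⟨_, hw⟩) <;> exact hw
    have hsumR : (A.ncard : ℝ) + (A'.ncard : ℝ) ≤ (Y₁.ncard : ℝ) := by
      have : A.ncard + A'.ncard ≤ Y₁.ncard := by omega
      exact_mod_cast this
    have hn1 : (1 : ℝ) ≤ (n : ℝ) := by exact_mod_cast hn
    nlinarith [mul_pos hη (lt_of_lt_of_le one_pos hn1)]
  obtain ⟨y, ⟨hy1, hy2⟩, ⟨hy3, hy4⟩⟩ := hne
  exact ⟨y, hy2, hy1, hy3⟩


lemma ncard_range_inl (n : ℕ) : (Set.range (Sum.inl : Fin n → Fin n ⊕ Fin n)).ncard = n := by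
  rw [← Set.image_univ, Set.ncard_image_of_injective _ Sum.inl_injective, Set.ncard_univ,
    Nat.card_eq_fintype_card, Fintype.card_fin]

lemma ncard_range_inr (n : ℕ) : (Set.range (Sum.inr : Fin n → Fin n ⊕ Fin n)).ncard = n := by
  rw [← Set.image_univ, Set.ncard_image_of_injective _ Sum.inr_injective, Set.ncard_univ,
    Nat.card_eq_fintype_card, Fintype.card_fin]

/-- Structure of a largest blue component in a 2-colored balanced bipartite graph
with minimum degree `(3/4 + η)n`: with `X₁ = H₁ ∩ X`, `Y₁ = H₁ ∩ Y`,
`X₂ = X \ X₁`, `Y₂ = Y \ Y₁`, all edges of `G` between `X₁` and `Y₂` and between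
`X₂` and `Y₁` are red (and not blue), any two vertices of `X₂` have a common red
neighbor in `Y₁`, and any two vertices of `Y₂` have a common red neighbor in `X₁`. -/
theorem largest_blue_component_structure (η : ℝ) (hη : 0 < η) :
    ∃ n₀ : ℕ, ∀ n : ℕ, n₀ ≤ n →
    ∀ (G R B : SimpleGraph (Fin n ⊕ Fin n)),
      G ≤ completeBipartiteGraph (Fin n) (Fin n) →
      R ⊔ B = G →
      (∀ v, (3 / 4 + η) * n ≤ ((G.neighborSet v).ncard : ℝ)) →
      ∀ H₁ : B.ConnectedComponent,
        (n : ℝ) / 2 ≤ (((H₁.supp ∩ Set.range Sum.inl).ncard : ℕ) : ℝ) →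
        (n : ℝ) / 2 ≤ (((H₁.supp ∩ Set.range Sum.inr).ncard : ℕ) : ℝ) →
        -- H₁ is a largest monochromatic component with both intersections ≥ n/2:
        (∀ (K : SimpleGraph (Fin n ⊕ Fin n)), (K = R ∨ K = B) →
          ∀ C : K.ConnectedComponent,
            (n : ℝ) / 2 ≤ (((C.supp ∩ Set.range Sum.inl).ncard : ℕ) : ℝ) →
            (n : ℝ) / 2 ≤ (((C.supp ∩ Set.range Sum.inr).ncard : ℕ) : ℝ) →
            C.supp.ncard ≤ H₁.supp.ncard) →
        -- all edges between X₁ and Y₂ and between X₂ and Y₁ are red: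
        ((∀ x y, x ∈ H₁.supp ∩ Set.range Sum.inl → y ∈ Set.range Sum.inr \ H₁.supp →
            G.Adj x y → R.Adj x y ∧ ¬ B.Adj x y) ∧
         (∀ x y, x ∈ Set.range Sum.inl \ H₁.supp → y ∈ H₁.supp ∩ Set.range Sum.inr →
            G.Adj x y → R.Adj x y ∧ ¬ B.Adj x y) ∧
         -- common red neighbors:
         (∀ u u', u ∈ Set.range Sum.inl \ H₁.supp → u' ∈ Set.range Sum.inl \ H₁.supp →
            ∃ y, y ∈ H₁.supp ∩ Set.range Sum.inr ∧ R.Adj u y ∧ R.Adj u' y) ∧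
         (∀ v v', v ∈ Set.range Sum.inr \ H₁.supp → v' ∈ Set.range Sum.inr \ H₁.supp →
            ∃ x, x ∈ H₁.supp ∩ Set.range Sum.inl ∧ R.Adj v x ∧ R.Adj v' x)) := by
  refine ⟨1, fun n hn G R B hG hRB hdeg H₁ hX₁ hY₁ _hmax => ?_⟩
  have key : ∀ a b, a ∈ H₁.supp → b ∉ H₁.supp → G.Adj a b → R.Adj a b ∧ ¬ B.Adj a b := by
    intro a b ha hb hab
    have hnB : ¬ B.Adj a b := by
      intro hB
      apply hb
      rw [SimpleGraph.ConnectedComponent.mem_supp_iff] at ha ⊢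
      rw [← ha]
      exact (SimpleGraph.ConnectedComponent.sound hB.reachable).symm
    refine ⟨?_, hnB⟩
    have : (R ⊔ B).Adj a b := by rw [hRB]; exact hab
    rcases this with h | h
    · exact h
    · exact absurd h hnB
  have nbrL : ∀ a : Fin n, G.neighborSet (Sum.inl a) ⊆ Set.range (Sum.inr : Fin n → _) := by
    intro a w hw
    have := hG hw
    rcases w with w | w
    · simp [completeBipartiteGraph] at this
    · exact ⟨w, rfl⟩
  have nbrR : ∀ a : Fin n, G.neighborSet (Sum.inr a) ⊆ Set.range (Sum.inl : Fin n → _) := by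
    intro a w hw
    have := hG hw
    rcases w with w | w
    · exact ⟨w, rfl⟩
    · simp [completeBipartiteGraph] at this
  refine ⟨?_, ?_, ?_, ?_⟩
  · rintro x y hx ⟨_, hy⟩ hxy
    exact key x y hx.1 hy hxy
  · rintro x y ⟨_, hx⟩ hy hxy
    obtain ⟨hR, hB⟩ := key y x hy.1 hx hxy.symm
    exact ⟨hR.symm, fun h => hB h.symm⟩
  · rintro u u' ⟨⟨a, rfl⟩, hu⟩ ⟨⟨a', rfl⟩, hu'⟩
    obtain ⟨y, hy, h1, h2⟩ := common_nbr_aux G η hη n hn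
      (Set.range Sum.inr) (H₁.supp ∩ Set.range Sum.inr) Set.inter_subset_right
      (ncard_range_inr n) hY₁ _ _ (nbrL a) (nbrL a') (hdeg _) (hdeg _)
    exact ⟨y, hy, ((key y _ hy.1 hu h1.symm).1).symm, ((key y _ hy.1 hu' h2.symm).1).symm⟩
  · rintro v v' ⟨⟨a, rfl⟩, hv⟩ ⟨⟨a', rfl⟩, hv'⟩
    obtain ⟨x, hx, h1, h2⟩ := common_nbr_aux G η hη n hn
      (Set.range Sum.inl) (H₁.supp ∩ Set.range Sum.inl) Set.inter_subset_right
      (ncard_range_inl n) hX₁ _ _ (nbrR a) (nbrR a') (hdeg _) (hdeg _)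
    exact ⟨x, hx, ((key x _ hx.1 hv h1.symm).1).symm, ((key x _ hx.1 hv' h2.symm).1).symm⟩
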